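/- Let π be dominant, w ≤_L π, and P ∈ PD(w). Then every crossing tile p ∈ P is π-dominated: row(p) ≤ λ'_{π(w⁻¹(s_p))}, where s_p is the pipe exiting p to the south. That is, P(cross) ⊆ P(π). -/

import Mathlib

open Equiv MvPolynomial

/-- A permutation of ℕ has finite support. -/
def FinSupp (w : Equiv.Perm ℕ) : Prop := {i | w i ≠ i}.Finite

/-- Inversion set Inv(w) = {(i,j) : i < j, w i > w j}. -/
def invSet (w : Equiv.Perm ℕ) : Set (ℕ × ℕ) := {p | p.1 < p.2 ∧ w p.2 < w p.1}

/-- Co-inversion set coInv(w) = {(i,j) : i < j, w i < w j}. -/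
def coinvSet (w : Equiv.Perm ℕ) : Set (ℕ × ℕ) := {p | p.1 < p.2 ∧ w p.1 < w p.2}

/-- Coxeter length ℓ(w) = |Inv(w)|. -/
noncomputable def len (w : Equiv.Perm ℕ) : ℕ := (invSet w).ncard

/-- Cover relation of left weak order: u = s_k * w with ℓ(u) = ℓ(w) + 1. -/
def WeakCover (w u : Equiv.Perm ℕ) : Prop :=
  ∃ k, u = Equiv.swap k (k + 1) * w ∧ len u = len w + 1

/-- Left weak order: reflexive-transitive closure of weak covers. -/
def leL (w u : Equiv.Perm ℕ) : Prop := Relation.ReflTransGen WeakCover w u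

/-- π avoids the pattern 132 (π is dominant). -/
def Avoids132 (π : Equiv.Perm ℕ) : Prop :=
  ¬ ∃ a b c : ℕ, a < b ∧ b < c ∧ π a < π c ∧ π c < π b

/-- Rothe diagram D(π) (0-indexed conventions). -/
def Rothe (π : Equiv.Perm ℕ) : Set (ℕ × ℕ) := {p | p.1 < π⁻¹ p.2 ∧ p.2 < π p.1}

/-- Young diagram of a partition (0-indexed): row i has l i cells. -/
def yd (l : ℕ → ℕ) : Set (ℕ × ℕ) := {p | p.2 < l p.1}

/-- Conjugate partition (0-indexed): column j has |{i : l i > j}| cells. -/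
noncomputable def conjPart (l : ℕ → ℕ) (j : ℕ) : ℕ := {i | j < l i}.ncard

/-- A pipe dream: a finite set of crossing tiles together with the (uniquely
determined) labels of the pipes on the four edges of each tile.  At a cross
tile the pipes pass straight through; at a bump tile the pipe from the north
exits west and the pipe from the east exits south.  Pipe j enters the quadrant
at the north edge of column j. -/
structure PipeDream where
  cross : Finset (ℕ × ℕ)
  north : ℕ × ℕ → ℕ
  east : ℕ × ℕ → ℕ
  south : ℕ × ℕ → ℕ
  west : ℕ × ℕ → ℕ
  north_top : ∀ j, north (0, j) = j
  north_succ : ∀ i j, north (i + 1, j) = south (i, j)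
  east_eq : ∀ i j, east (i, j) = west (i, j + 1)
  south_cross : ∀ p ∈ cross, south p = north p
  west_cross : ∀ p ∈ cross, west p = east p
  south_bump : ∀ p, p ∉ cross → south p = east p
  west_bump : ∀ p, p ∉ cross → west p = north p

namespace PipeDream

/-- Pipes a and b cross at position p. -/
def CrossAt (P : PipeDream) (a b : ℕ) (p : ℕ × ℕ) : Prop :=
  p ∈ P.cross ∧ ({P.north p, P.east p} : Set ℕ) = {a, b}

/-- A pipe dream is reduced if no two pipes cross more than once. -/
def Reduced (P : PipeDream) : Prop :=
  ∀ a b p q, P.CrossAt a b p → P.CrossAt a b q → p = q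

/-- P is a pipe dream for the permutation w: pipe a exits on the west edge at
row w⁻¹(a), i.e. the one-line notation read along the west edge is w. -/
def IsFor (P : PipeDream) (w : Equiv.Perm ℕ) : Prop := ∀ i, P.west (i, 0) = w i

/-- Pipe k passes through the tile p. -/
def OnPipe (P : PipeDream) (k : ℕ) (p : ℕ × ℕ) : Prop := P.north p = k ∨ P.east p = k

/-- p lies weakly northwest of pipe k. -/
def NWOfPipe (P : PipeDream) (k : ℕ) (p : ℕ × ℕ) : Prop :=
  ∃ q, P.OnPipe k q ∧ p.1 ≤ q.1 ∧ p.2 ≤ q.2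

end PipeDream

/-- The set of reduced pipe dreams for w. -/
def PD (w : Equiv.Perm ℕ) : Set PipeDream := {P | P.Reduced ∧ P.IsFor w}

/-- The set of π-dominated positions of a pipe dream P ∈ PD(w), where π is the
dominant permutation with Rothe diagram the Young diagram of l:
row(p) < λ'(π(w⁻¹(s_p))) (0-indexed), s_p being the pipe exiting p south. -/
noncomputable def dominated (π : Equiv.Perm ℕ) (l : ℕ → ℕ) (w : Equiv.Perm ℕ)
    (P : PipeDream) : Set (ℕ × ℕ) :=
  {p | p.1 < conjPart l (π (w⁻¹ (P.south p)))}

/-- The Schubert polynomial as the pipe dream generating function. -/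
noncomputable def Schub (w : Equiv.Perm ℕ) : MvPolynomial ℕ ℤ :=
  ∑ᶠ P ∈ PD w, ∏ p ∈ P.cross, X p.1

/-- The polynomial ring ℤ[x;y]: x-variables are `Sum.inl i`, y-variables `Sum.inr i`. -/
abbrev PolyXY := MvPolynomial (ℕ ⊕ ℕ) ℤ

/-- The field of rational functions in the x- and y-variables. -/
noncomputable abbrev RatXY := FractionRing PolyXY

noncomputable def Xv (i : ℕ) : RatXY := algebraMap PolyXY RatXY (X (Sum.inl i))
noncomputable def Yv (i : ℕ) : RatXY := algebraMap PolyXY RatXY (X (Sum.inr i))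

/-- The π-padded Schubert polynomial 𝔖_w^π(x;y) = y^λ · 𝔖_w(x₁/y₁, x₂/y₂, …),
viewed in the field of rational functions. -/
noncomputable def padded (l : ℕ → ℕ) (w : Equiv.Perm ℕ) : RatXY :=
  (∏ᶠ i, Yv i ^ l i) * (aeval (fun i => Xv i / Yv i) (Schub w))

/-- Δ = Σ_i x_i ∂/∂y_i. -/
noncomputable def deltaOp (f : PolyXY) : PolyXY :=
  ∑ᶠ i : ℕ, X (Sum.inl i) * pderiv (Sum.inr i) f

/-- ∇ = Σ_i y_i ∂/∂x_i. -/
noncomputable def nablaOp (f : PolyXY) : PolyXY :=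
  ∑ᶠ i : ℕ, X (Sum.inr i) * pderiv (Sum.inl i) f


section Aux

namespace PipeDream

variable (P : PipeDream)

lemma row_nc (i j : ℕ) : ∃ m, j ≤ m ∧ (i, m) ∉ P.cross := by
  refine ⟨max j (P.cross.sup Prod.snd + 1), le_max_left _ _, fun hm => ?_⟩
  have h1 : max j (P.cross.sup Prod.snd + 1) ≤ P.cross.sup Prod.snd :=
    Finset.le_sup (f := Prod.snd) hm
  have h2 : P.cross.sup Prod.snd + 1 ≤ max j (P.cross.sup Prod.snd + 1) := le_max_right _ _
  omega

lemma col_nc (i j : ℕ) : ∃ r, i ≤ r ∧ (r, j) ∉ P.cross := by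
  refine ⟨max i (P.cross.sup Prod.fst + 1), le_max_left _ _, fun hm => ?_⟩
  have h1 : max i (P.cross.sup Prod.fst + 1) ≤ P.cross.sup Prod.fst :=
    Finset.le_sup (f := Prod.fst) hm
  have h2 : P.cross.sup Prod.fst + 1 ≤ max i (P.cross.sup Prod.fst + 1) := le_max_right _ _
  omega

/-- first non-crossing column `≥ j` in row `i` -/
noncomputable def rnc (i j : ℕ) : ℕ := Nat.find (P.row_nc i j)

/-- first non-crossing row `≥ i` in column `j` -/
noncomputable def cnc (i j : ℕ) : ℕ := Nat.find (P.col_nc i j)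

lemma rnc_ge (i j : ℕ) : j ≤ P.rnc i j := (Nat.find_spec (P.row_nc i j)).1

lemma rnc_nc (i j : ℕ) : (i, P.rnc i j) ∉ P.cross := (Nat.find_spec (P.row_nc i j)).2

lemma rnc_min (i j : ℕ) : ∀ t, j ≤ t → t < P.rnc i j → (i, t) ∈ P.cross := by
  intro t h1 h2
  by_contra hc
  exact Nat.find_min (P.row_nc i j) h2 ⟨h1, hc⟩

lemma rnc_le {i j m : ℕ} (h1 : j ≤ m) (h2 : (i, m) ∉ P.cross) : P.rnc i j ≤ m :=
  Nat.find_le ⟨h1, h2⟩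

lemma rnc_eq {i j m : ℕ} (h1 : j ≤ m) (h2 : (i, m) ∉ P.cross)
    (h3 : ∀ t, j ≤ t → t < m → (i, t) ∈ P.cross) : P.rnc i j = m := by
  refine le_antisymm (P.rnc_le h1 h2) ?_
  by_contra hc
  exact P.rnc_nc i j (h3 _ (P.rnc_ge i j) (by omega))

lemma cnc_ge (i j : ℕ) : i ≤ P.cnc i j := (Nat.find_spec (P.col_nc i j)).1

lemma cnc_nc (i j : ℕ) : (P.cnc i j, j) ∉ P.cross := (Nat.find_spec (P.col_nc i j)).2

lemma cnc_min (i j : ℕ) : ∀ r, i ≤ r → r < P.cnc i j → (r, j) ∈ P.cross := by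
  intro r h1 h2
  by_contra hc
  exact Nat.find_min (P.col_nc i j) h2 ⟨h1, hc⟩

lemma west_eq_aux : ∀ d i j, P.rnc i j - j = d → P.west (i, j) = P.north (i, P.rnc i j) := by
  intro d
  induction d with
  | zero =>
    intro i j hd
    have hge := P.rnc_ge i j
    have heq : P.rnc i j = j := by omega
    have hnc : (i, j) ∉ P.cross := by rw [← heq]; exact P.rnc_nc i j
    rw [heq]
    exact P.west_bump _ hnc
  | succ n ih =>
    intro i j hd
    have hge := P.rnc_ge i j
    have hlt : j < P.rnc i j := by omega
    have hcross : (i, j) ∈ P.cross := P.rnc_min i j j le_rfl hlt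
    have hstep : P.rnc i (j + 1) = P.rnc i j :=
      P.rnc_eq hlt (P.rnc_nc i j) (fun t h1 h2 => P.rnc_min i j t (by omega) h2)
    calc P.west (i, j) = P.east (i, j) := P.west_cross _ hcross
      _ = P.west (i, j + 1) := P.east_eq i j
      _ = P.north (i, P.rnc i (j + 1)) := ih i (j + 1) (by omega)
      _ = P.north (i, P.rnc i j) := by rw [hstep]

lemma west_eq (i j : ℕ) : P.west (i, j) = P.north (i, P.rnc i j) := P.west_eq_aux _ i j rfl

lemma north_cnc_aux : ∀ d i j, P.cnc i j - i = d → P.north (P.cnc i j, j) = P.north (i, j) := by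
  intro d
  induction d with
  | zero =>
    intro i j hd
    have hge := P.cnc_ge i j
    have heq : P.cnc i j = i := by omega
    rw [heq]
  | succ n ih =>
    intro i j hd
    have hge := P.cnc_ge i j
    have hlt : i < P.cnc i j := by omega
    have hcross : (i, j) ∈ P.cross := P.cnc_min i j i le_rfl hlt
    have hstep : P.cnc (i + 1) j = P.cnc i j := by
      refine le_antisymm (Nat.find_le ⟨hlt, P.cnc_nc i j⟩) ?_
      by_contra hc
      exact P.cnc_nc (i + 1) j (P.cnc_min i j _ (by have := P.cnc_ge (i+1) j; omega)
        (by omega))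
    have h1 : P.north (i + 1, j) = P.north (i, j) := by
      rw [P.north_succ, P.south_cross _ hcross]
    rw [← h1, ← hstep]
    exact ih (i + 1) j (by rw [hstep]; omega)

lemma north_cnc (i j : ℕ) : P.north (P.cnc i j, j) = P.north (i, j) :=
  P.north_cnc_aux _ i j rfl

lemma exitsWest : ∀ j i, ∃ r, i ≤ r ∧ P.west (r, 0) = P.west (i, j) := by
  intro j
  induction j with
  | zero => exact fun i => ⟨i, le_rfl, rfl⟩
  | succ j ih =>
    intro i
    by_cases hc : (i, j) ∈ P.cross
    · obtain ⟨r, hr1, hr2⟩ := ih i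
      exact ⟨r, hr1, by rw [hr2, P.west_cross _ hc, P.east_eq]⟩
    · have h1 : P.north (i + 1, j) = P.west (i, j + 1) := by
        rw [P.north_succ, P.south_bump _ hc, P.east_eq]
      obtain ⟨r, hr1, hr2⟩ := ih (P.cnc (i + 1) j)
      refine ⟨r, ?_, ?_⟩
      · have := P.cnc_ge (i + 1) j; omega
      · rw [hr2, P.west_bump _ (P.cnc_nc (i + 1) j), P.north_cnc, h1]

lemma exit_ge {w : Equiv.Perm ℕ} (hw : P.IsFor w) (i j : ℕ) :
    i ≤ w⁻¹ (P.north (i, j)) := by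
  obtain ⟨r, hr1, hr2⟩ := P.exitsWest j (P.cnc i j)
  have h3 : P.west (P.cnc i j, j) = P.north (i, j) := by
    rw [P.west_bump _ (P.cnc_nc i j), P.north_cnc]
  have h4 : w r = P.north (i, j) := by rw [← hw r, hr2, h3]
  have h5 : w⁻¹ (P.north (i, j)) = r := by rw [← h4]; simp
  have := P.cnc_ge i j
  omega

lemma cross_out {i t : ℕ} (h : (i, t) ∈ P.cross) : P.north (i + 1, t) = P.north (i, t) := by
  rw [P.north_succ, P.south_cross _ h]

lemma bump_out {i t : ℕ} (h : (i, t) ∉ P.cross) :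
    P.north (i + 1, t) = P.north (i, P.rnc i (t + 1)) := by
  rw [P.north_succ, P.south_bump _ h, P.east_eq, P.west_eq]

lemma north_out {i o t : ℕ} (ho : (i, o) ∉ P.cross) (hot : o < t) (ht : (i, t) ∉ P.cross)
    (hall : ∀ s, o < s → s < t → (i, s) ∈ P.cross) :
    P.north (i + 1, o) = P.north (i, t) := by
  rw [P.bump_out ho, P.rnc_eq (by omega : o + 1 ≤ t) ht (fun s h1 h2 => hall s (by omega) h2)]

lemma exists_lnc (i t : ℕ) (h : ∃ s, s < t ∧ (i, s) ∉ P.cross) :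
    ∃ o, o < t ∧ (i, o) ∉ P.cross ∧ ∀ s, o < s → s < t → (i, s) ∈ P.cross := by
  classical
  obtain ⟨s0, hs0, hs0'⟩ := h
  set Q : ℕ → Prop := fun s => (i, s) ∉ P.cross with hQ
  have ht1 : 1 ≤ t := by omega
  have hspec : Q (Nat.findGreatest Q (t - 1)) :=
    Nat.findGreatest_spec (P := Q) (n := t - 1) (m := s0) (by omega) hs0'
  refine ⟨Nat.findGreatest Q (t - 1), ?_, hspec, ?_⟩
  · have := Nat.findGreatest_le (P := Q) (t - 1); omega
  · intro s h1 h2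
    by_contra hc
    exact Nat.findGreatest_is_greatest (P := Q) h1 (by omega) hc

/-- bound on crossing rows -/
noncomputable def rbd : ℕ := P.cross.sup Prod.fst + 1

lemma allbump {i j : ℕ} (h : P.rbd ≤ i) : (i, j) ∉ P.cross := by
  intro hm
  have h1 : i ≤ P.cross.sup Prod.fst := Finset.le_sup (f := Prod.fst) hm
  simp only [rbd] at h
  omega

lemma north_shift {i : ℕ} (h : P.rbd ≤ i) : ∀ t j, P.north (i + t, j) = P.north (i, j + t) := by
  intro t
  induction t with
  | zero => intro j; rfl
  | succ n ih =>
    intro j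
    have h1 : P.north (i + n + 1, j) = P.north (i + n, j + 1) := by
      rw [P.north_succ, P.south_bump _ (P.allbump (by omega)), P.east_eq,
        P.west_bump _ (P.allbump (by omega))]
    calc P.north (i + (n + 1), j) = P.north (i + n + 1, j) := by ring_nf
      _ = P.north (i + n, j + 1) := h1
      _ = P.north (i, j + 1 + n) := ih (j + 1)
      _ = P.north (i, j + (n + 1)) := by ring_nf

lemma base_val {w : Equiv.Perm ℕ} (hw : P.IsFor w) {i : ℕ} (h : P.rbd ≤ i) (j : ℕ) :
    P.north (i, j) = w (i + j) := by
  have h1 : P.north (i + j, 0) = P.north (i, 0 + j) := P.north_shift h j 0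
  rw [← hw (i + j), P.west_bump _ (P.allbump (by omega : P.rbd ≤ i + j)), h1, Nat.zero_add]

lemma inv2 : ∀ i j j', j < j' →
    (∀ q : ℕ × ℕ, q.1 < i → ¬ P.CrossAt (P.north (i, j)) (P.north (i, j')) q) →
    P.north (i, j) < P.north (i, j') := by
  intro i
  induction i with
  | zero => intro j j' hjj _; rw [P.north_top, P.north_top]; exact hjj
  | succ i ih =>
    intro j j' hjj H
    by_cases hcj : (i, j) ∈ P.cross <;> by_cases hcj' : (i, j') ∈ P.cross
    · rw [P.cross_out hcj, P.cross_out hcj']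
      refine ih j j' hjj (fun q hq => ?_)
      rw [← P.cross_out hcj, ← P.cross_out hcj']
      exact H q (by omega)
    · rw [P.cross_out hcj, P.bump_out hcj']
      have h1 : j < P.rnc i (j' + 1) := by have := P.rnc_ge i (j' + 1); omega
      refine ih _ _ h1 (fun q hq => ?_)
      rw [← P.cross_out hcj, ← P.bump_out hcj']
      exact H q (by omega)
    · have hge : j + 1 ≤ P.rnc i (j + 1) := P.rnc_ge i (j + 1)
      rcases lt_trichotomy (P.rnc i (j + 1)) j' with h | h | h
      · rw [P.bump_out hcj, P.cross_out hcj']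
        refine ih _ _ h (fun q hq => ?_)
        rw [← P.bump_out hcj, ← P.cross_out hcj']
        exact H q (by omega)
      · exfalso; apply P.rnc_nc i (j + 1); rw [h]; exact hcj'
      · exfalso
        have he : P.rnc i (j' + 1) = P.rnc i (j + 1) :=
          P.rnc_eq (by omega) (P.rnc_nc i (j + 1))
            (fun s h1 h2 => P.rnc_min i (j + 1) s (by omega) h2)
        have heast : P.east (i, j') = P.north (i + 1, j) := by
          rw [P.east_eq, P.west_eq, he, P.bump_out hcj]
        refine H (i, j') (by omega) ⟨hcj', ?_⟩
        show ({P.north (i, j'), P.east (i, j')} : Set ℕ) = _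
        rw [heast, ← P.cross_out hcj']
        exact Set.pair_comm _ _
    · have h1 : P.rnc i (j + 1) ≤ P.rnc i (j' + 1) :=
        P.rnc_le (by have := P.rnc_ge i (j' + 1); omega) (P.rnc_nc i (j' + 1))
      have h2 : P.rnc i (j + 1) ≠ P.rnc i (j' + 1) := by
        intro h
        exact hcj' (P.rnc_min i (j + 1) j' (by omega)
          (by have := P.rnc_ge i (j' + 1); omega))
      rw [P.bump_out hcj, P.bump_out hcj']
      refine ih _ _ (by omega) (fun q hq => ?_)
      rw [← P.bump_out hcj, ← P.bump_out hcj']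
      exact H q (by omega)

lemma inv1 {w : Equiv.Perm ℕ} (hw : P.IsFor w) :
    ∀ n i, P.rbd ≤ i + n → ∀ j j', j < j' →
    (∀ q : ℕ × ℕ, i ≤ q.1 → ¬ P.CrossAt (P.north (i, j)) (P.north (i, j')) q) →
    w⁻¹ (P.north (i, j)) < w⁻¹ (P.north (i, j')) := by
  intro n
  induction n with
  | zero =>
    intro i hi j j' hjj _
    rw [P.base_val hw (by omega), P.base_val hw (by omega)]
    simp only [Equiv.Perm.coe_inv, Equiv.symm_apply_apply]
    omega
  | succ n ih =>
    intro i hi j j' hjj H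
    by_cases hj'0 : j' = P.rnc i 0
    · exfalso
      have hcr : (i, j) ∈ P.cross := P.rnc_min i 0 j (Nat.zero_le j) (by omega)
      have hrnc : P.rnc i (j + 1) = j' :=
        P.rnc_eq (by omega) (by rw [hj'0]; exact P.rnc_nc i 0)
          (fun t h1 h2 => P.rnc_min i 0 t (Nat.zero_le t) (by omega))
      refine H (i, j) le_rfl ⟨hcr, ?_⟩
      show ({P.north (i, j), P.east (i, j)} : Set ℕ) = _
      rw [P.east_eq, P.west_eq, hrnc]
    by_cases hj0 : j = P.rnc i 0
    · have hcw : P.north (i, j) = w i := by rw [hj0, ← P.west_eq]; exact hw i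
      have h1 : w⁻¹ (P.north (i, j)) = i := by rw [hcw]; simp
      have hd : ∃ o, P.north (i + 1, o) = P.north (i, j') := by
        by_cases hc' : (i, j') ∈ P.cross
        · exact ⟨j', P.cross_out hc'⟩
        · obtain ⟨o, ho1, ho2, ho3⟩ :=
            P.exists_lnc i j' ⟨j, hjj, by rw [hj0]; exact P.rnc_nc i 0⟩
          exact ⟨o, P.north_out ho2 ho1 hc' ho3⟩
      obtain ⟨o, ho⟩ := hd
      have h2 := P.exit_ge hw (i + 1) o
      rw [ho] at h2
      omega
    · by_cases hcj : (i, j) ∈ P.cross <;> by_cases hcj' : (i, j') ∈ P.cross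
      · rw [← P.cross_out hcj, ← P.cross_out hcj']
        refine ih (i + 1) (by omega) j j' hjj (fun q hq => ?_)
        rw [P.cross_out hcj, P.cross_out hcj']
        exact H q (by omega)
      · -- j cross, j' bump
        have hlt0 : P.rnc i 0 < j' := by
          have := P.rnc_le (Nat.zero_le j') hcj'
          omega
        obtain ⟨o', ho1, ho2, ho3⟩ :=
          P.exists_lnc i j' ⟨P.rnc i 0, hlt0, P.rnc_nc i 0⟩
        rcases lt_trichotomy o' j with h | h | h
        · exfalso
          have hrnc : P.rnc i (j + 1) = j' :=
            P.rnc_eq (by omega) hcj' (fun s h1 h2 => ho3 s (by omega) h2)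
          refine H (i, j) le_rfl ⟨hcj, ?_⟩
          show ({P.north (i, j), P.east (i, j)} : Set ℕ) = _
          rw [P.east_eq, P.west_eq, hrnc]
        · exact absurd hcj (by rw [← h]; exact ho2)
        · rw [← P.cross_out hcj, ← P.north_out ho2 ho1 hcj' ho3]
          refine ih (i + 1) (by omega) j o' h (fun q hq => ?_)
          rw [P.cross_out hcj, P.north_out ho2 ho1 hcj' ho3]
          exact H q (by omega)
      · -- j bump, j' cross
        have hlt0 : P.rnc i 0 < j := by
          have := P.rnc_le (Nat.zero_le j) hcj
          omega
        obtain ⟨o, ho1, ho2, ho3⟩ := P.exists_lnc i j ⟨P.rnc i 0, hlt0, P.rnc_nc i 0⟩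
        rw [← P.north_out ho2 ho1 hcj ho3, ← P.cross_out hcj']
        refine ih (i + 1) (by omega) o j' (by omega) (fun q hq => ?_)
        rw [P.north_out ho2 ho1 hcj ho3, P.cross_out hcj']
        exact H q (by omega)
      · -- both bump
        have hlt0 : P.rnc i 0 < j := by
          have := P.rnc_le (Nat.zero_le j) hcj
          omega
        obtain ⟨o, ho1, ho2, ho3⟩ := P.exists_lnc i j ⟨P.rnc i 0, hlt0, P.rnc_nc i 0⟩
        obtain ⟨o', ho1', ho2', ho3'⟩ := P.exists_lnc i j' ⟨j, hjj, hcj⟩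
        have hoo : j ≤ o' := by
          by_contra hc
          exact hcj (ho3' j (by omega) hjj)
        rw [← P.north_out ho2 ho1 hcj ho3, ← P.north_out ho2' ho1' hcj' ho3']
        refine ih (i + 1) (by omega) o o' (by omega) (fun q hq => ?_)
        rw [P.north_out ho2 ho1 hcj ho3, P.north_out ho2' ho1' hcj' ho3']
        exact H q (by omega)

end PipeDream

lemma swap_lt {k x y : ℕ} (hxy : x < y) (h : ¬(x = k ∧ y = k + 1)) :
    Equiv.swap k (k + 1) x < Equiv.swap k (k + 1) y := by
  simp only [Equiv.swap_apply_def]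
  split_ifs <;> omega

lemma weakCover_subset {w u : Equiv.Perm ℕ} (h : WeakCover w u) : invSet w ⊆ invSet u := by
  obtain ⟨k, rfl, hlen⟩ := h
  by_cases hq : w⁻¹ (k + 1) < w⁻¹ k
  · exfalso
    have hqmem : (w⁻¹ (k + 1), w⁻¹ k) ∈ invSet w := by
      refine ⟨hq, ?_⟩
      simp only [Equiv.Perm.coe_inv, Equiv.apply_symm_apply]
      omega
    have hset : invSet (Equiv.swap k (k + 1) * w) = invSet w \ {(w⁻¹ (k + 1), w⁻¹ k)} := by
      ext ⟨i, j⟩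
      by_cases hpq : (i, j) = (w⁻¹ (k + 1), w⁻¹ k)
      · rw [hpq]
        simp only [invSet, Set.mem_setOf_eq, Set.mem_diff, Set.mem_singleton_iff,
          Equiv.Perm.mul_apply, Equiv.Perm.coe_inv, Equiv.apply_symm_apply, Equiv.swap_apply_left,
          Equiv.swap_apply_right]
        exact ⟨fun h => absurd h.2 (by omega), fun h => absurd trivial h.2⟩
      · simp only [invSet, Set.mem_setOf_eq, Set.mem_diff, Set.mem_singleton_iff,
          Equiv.Perm.mul_apply]
        constructor
        · rintro ⟨hij, hlt⟩
          refine ⟨⟨hij, ?_⟩, hpq⟩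
          have c1 : ¬(Equiv.swap k (k + 1) (w j) = k ∧ Equiv.swap k (k + 1) (w i) = k + 1) := by
            rintro ⟨h1, h2⟩
            apply hpq
            have e1 : w j = k + 1 := by
              have := congrArg (Equiv.swap k (k + 1)) h1
              simpa [Equiv.swap_apply_left] using this
            have e2 : w i = k := by
              have := congrArg (Equiv.swap k (k + 1)) h2
              simpa [Equiv.swap_apply_right] using this
            have : j = w⁻¹ (k + 1) := by rw [← e1]; simp
            have : i = w⁻¹ k := by rw [← e2]; simp
            omega
          have := swap_lt hlt c1
          simpa [Equiv.swap_apply_self] using this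
        · rintro ⟨⟨hij, hlt⟩, hne⟩
          refine ⟨hij, ?_⟩
          apply swap_lt hlt
          rintro ⟨h1, h2⟩
          apply hne
          have e1 : j = w⁻¹ k := by rw [← h1]; simp
          have e2 : i = w⁻¹ (k + 1) := by rw [← h2]; simp
          rw [e1, e2]
    rcases (invSet w).finite_or_infinite with hfin | hinf
    · have h1 : len (Equiv.swap k (k + 1) * w) = len w - 1 := by
        rw [len, hset, Set.ncard_diff_singleton_of_mem hqmem]
        rfl
      have h2 : 0 < len w := by
        rw [len]
        exact (Set.ncard_pos hfin).mpr ⟨_, hqmem⟩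
      omega
    · have h1 : len w = 0 := hinf.ncard
      have h2 : (invSet (Equiv.swap k (k + 1) * w)).Infinite := by
        rw [hset]
        exact hinf.diff (Set.finite_singleton _)
      have h3 := h2.ncard
      have hlen' : (invSet (Equiv.swap k (k + 1) * w)).ncard = (invSet w).ncard + 1 := hlen
      have h1' : (invSet w).ncard = 0 := h1
      omega
  · rintro ⟨i, j⟩ ⟨hij, hlt⟩
    refine ⟨hij, ?_⟩
    simp only [Equiv.Perm.mul_apply]
    apply swap_lt hlt
    rintro ⟨h1, h2⟩
    apply hq
    have e1 : j = w⁻¹ k := by rw [← h1]; simp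
    have e2 : i = w⁻¹ (k + 1) := by rw [← h2]; simp
    omega

lemma leL_subset {w u : Equiv.Perm ℕ} (h : leL w u) : invSet w ⊆ invSet u := by
  induction h with
  | refl => exact subset_rfl
  | tail _ hc ih => exact ih.trans (weakCover_subset hc)

end Aux

/-- every crossing tile of P ∈ PD(w) is π-dominated:
P(cross) ⊆ P(π). -/
theorem stmt10 (π w : Equiv.Perm ℕ) (l : ℕ → ℕ) (hπ : FinSupp π)
    (hdom : Avoids132 π) (hl : Antitone l) (hsupp : (Function.support l).Finite)
    (hD : Rothe π = yd l) (hw : leL w π)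
    (P : PipeDream) (hP : P ∈ PD w) :
    ∀ p ∈ P.cross, p.1 < conjPart l (π (w⁻¹ (P.south p))) := by
  obtain ⟨hred, hwP⟩ := hP
  intro p hp
  obtain ⟨i, j⟩ := p
  have hsouth : P.south (i, j) = P.north (i, j) := P.south_cross _ hp
  set k := P.north (i, j) with hk
  set m := P.rnc i (j + 1) with hmdef
  set a := P.north (i, m) with ha
  have hmnc : (i, m) ∉ P.cross := P.rnc_nc i (j + 1)
  have hjm : j < m := by have := P.rnc_ge i (j + 1); omega
  have hea : P.east (i, j) = a := by rw [P.east_eq, P.west_eq, ha]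
  have hCross : P.CrossAt k a (i, j) := ⟨hp, by rw [hea, ← hk]⟩
  -- the two pipes form an inversion: k < a
  have hka : k < a := by
    refine P.inv2 i j m hjm (fun q hq hq' => ?_)
    have h := hred k a (i, j) q hCross hq'
    rw [← h] at hq
    simp at hq
  -- and a exits strictly above k, weakly below row i
  have hB2 : i ≤ w⁻¹ a ∧ w⁻¹ a < w⁻¹ k := by
    by_cases hm0 : m = P.rnc i 0
    · have haw : a = w i := by rw [ha, hm0, ← P.west_eq]; exact hwP i
      have h1 : w⁻¹ a = i := by rw [haw]; simp
      have hkn : P.north (i + 1, j) = k := P.cross_out hp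
      have h2 := P.exit_ge hwP (i + 1) j
      rw [hkn] at h2
      exact ⟨by omega, by omega⟩
    · have hlt0 : P.rnc i 0 < m := by
        have := P.rnc_le (Nat.zero_le m) hmnc
        omega
      obtain ⟨o, ho1, ho2, ho3⟩ := P.exists_lnc i m ⟨P.rnc i 0, hlt0, P.rnc_nc i 0⟩
      have hoj : o < j := by
        rcases lt_trichotomy o j with h | h | h
        · exact h
        · exact absurd hp (by rw [← h]; exact ho2)
        · exact absurd (P.rnc_min i (j + 1) o (by omega) (by omega)) ho2
      have hao : P.north (i + 1, o) = a := P.north_out ho2 ho1 hmnc ho3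
      have hkj : P.north (i + 1, j) = k := P.cross_out hp
      have h2 : w⁻¹ a < w⁻¹ k := by
        rw [← hao, ← hkj]
        refine P.inv1 hwP P.rbd (i + 1) (by omega) o j hoj (fun q hq hq' => ?_)
        rw [hao, hkj] at hq'
        have hCross' : P.CrossAt a k (i, j) :=
          ⟨hp, by rw [hea, ← hk]; exact Set.pair_comm k a⟩
        have h := hred a k (i, j) q hCross' hq'
        rw [← h] at hq
        simp at hq
      have h3 := P.exit_ge hwP (i + 1) o
      rw [hao] at h3
      exact ⟨by omega, h2⟩
  -- transfer the inversion to π via the weak order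
  have hinvw : (w⁻¹ a, w⁻¹ k) ∈ invSet w :=
    ⟨hB2.2, by simp only [Equiv.Perm.coe_inv, Equiv.apply_symm_apply]; exact hka⟩
  have hinvπ : (w⁻¹ a, w⁻¹ k) ∈ invSet π := leL_subset hw hinvw
  have hyd : (w⁻¹ a, π (w⁻¹ k)) ∈ yd l := by
    rw [← hD]
    exact ⟨by simp only [Equiv.Perm.coe_inv, Equiv.symm_apply_apply]; exact hB2.2, hinvπ.2⟩
  have hld : π (w⁻¹ k) < l (w⁻¹ a) := hyd
  have hfin : {r | π (w⁻¹ k) < l r}.Finite :=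
    hsupp.subset (fun r hr => by
      simp only [Set.mem_setOf_eq] at hr
      simp only [Function.mem_support]
      omega)
  have hsubIic : Set.Iic (w⁻¹ a) ⊆ {r | π (w⁻¹ k) < l r} := fun r hr =>
    lt_of_lt_of_le hld (hl hr)
  have hcard : w⁻¹ a + 1 ≤ conjPart l (π (w⁻¹ k)) := by
    have h1 : (Set.Iic (w⁻¹ a)).ncard = w⁻¹ a + 1 := by
      rw [← Finset.coe_Iic, Set.ncard_coe_finset, Nat.card_Iic]
    calc w⁻¹ a + 1 = (Set.Iic (w⁻¹ a)).ncard := h1.symm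
      _ ≤ _ := Set.ncard_le_ncard hsubIic hfin
  show (i, j).1 < conjPart l (π (w⁻¹ (P.south (i, j))))
  rw [hsouth]
  show i < conjPart l (π (w⁻¹ k))
  have := hB2.1
  omega
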